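/- Let d be a natural number, c : Fin d → ℂ, and let u : ℕ → ℂ satisfy the linear recurrence u(n + d) = Σ_{i < d} c(i)·u(n + i) for all n ∈ ℕ. Let L, r be real numbers with r > 0 and L > 0, and assume every complex root of the characteristic polynomial is of modulus less than L, i.e., every z ∈ ℂ with z^d = Σ_{i < d} c(i)·z^i satisfies |z| < L. Then there exists N ∈ ℕ such that |u(n)| ≤ r·L^n for all n ≥ N. -/

import Mathlib

open Filter Matrix Topology
open scoped ENNReal NNReal

attribute [local instance] Matrix.linftyOpNormedRing Matrix.linftyOpNormedAlgebra

/-- An LRS over `ℂ` all of whose characteristic roots have modulus below `L`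
is eventually bounded by `r·L^n` for any `r > 0`. -/
theorem lrs_growth_bound
    (d : ℕ) (c : Fin d → ℂ) (u : ℕ → ℂ)
    (hrec : ∀ n : ℕ, u (n + d) = ∑ i : Fin d, c i * u (n + (i : ℕ)))
    (L r : ℝ) (hr : 0 < r) (hL : 0 < L)
    (hroots : ∀ z : ℂ, z ^ d = ∑ i : Fin d, c i * z ^ (i : ℕ) → ‖z‖ < L) :
    ∃ N : ℕ, ∀ n ≥ N, ‖u n‖ ≤ r * L ^ n := by
  classical
  rcases Nat.eq_zero_or_pos d with hd0 | hd
  · subst hd0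
    refine ⟨0, fun n _ => ?_⟩
    have hu : u n = 0 := by simpa using hrec n
    rw [hu]
    simp only [norm_zero]
    positivity
  haveI : Nonempty (Fin d) := ⟨⟨0, hd⟩⟩
  haveI : CompleteSpace (Matrix (Fin d) (Fin d) ℂ) := FiniteDimensional.complete ℂ _
  set M : Matrix (Fin d) (Fin d) ℂ :=
    Matrix.of fun i j =>
      if (i : ℕ) + 1 = d then c j else if (j : ℕ) = (i : ℕ) + 1 then 1 else 0 with hM
  have hMv : ∀ (v : Fin d → ℂ) (i : Fin d), (M *ᵥ v) i =
      if h : (i : ℕ) + 1 = d then ∑ j, c j * v j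
      else v ⟨(i : ℕ) + 1, lt_of_le_of_ne i.2 h⟩ := by
    intro v i
    by_cases h : (i : ℕ) + 1 = d
    · simp [Matrix.mulVec, dotProduct, hM, h]
    · rw [dif_neg h]
      have hi1 : (i : ℕ) + 1 < d := lt_of_le_of_ne i.2 h
      simp only [Matrix.mulVec, dotProduct, hM, Matrix.of_apply, if_neg h]
      rw [Finset.sum_eq_single (⟨(i : ℕ) + 1, hi1⟩ : Fin d)]
      · simp
      · intro b _ hb
        rw [if_neg, zero_mul]
        intro hb'
        exact hb (Fin.ext hb')
      · simp
  -- every spectrum element is a characteristic root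
  have hspec : ∀ z ∈ spectrum ℂ M, ‖z‖₊ < L.toNNReal := by
    intro z hz
    rw [spectrum.mem_iff] at hz
    have hdet : (algebraMap ℂ (Matrix (Fin d) (Fin d) ℂ) z - M).det = 0 := by
      by_contra h
      exact hz ((Matrix.isUnit_iff_isUnit_det _).mpr (isUnit_iff_ne_zero.mpr h))
    obtain ⟨v, hv0, hv⟩ := Matrix.exists_mulVec_eq_zero_iff.mpr hdet
    have heig : M *ᵥ v = z • v := by
      rw [Matrix.sub_mulVec, Algebra.algebraMap_eq_smul_one, Matrix.smul_mulVec,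
        Matrix.one_mulVec] at hv
      exact (sub_eq_zero.mp hv).symm
    have hpow : ∀ k, ∀ hk : k < d, v ⟨k, hk⟩ = z ^ k * v ⟨0, hd⟩ := by
      intro k
      induction k with
      | zero => intro hk; simp
      | succ k ih =>
        intro hk
        have hk' : k < d := by omega
        have hstep := congrFun heig ⟨k, hk'⟩
        rw [hMv] at hstep
        rw [dif_neg (by simp; omega)] at hstep
        have : v ⟨k + 1, hk⟩ = z * v ⟨k, hk'⟩ := hstep
        rw [this, ih hk', pow_succ]
        ring
    have hv00 : v ⟨0, hd⟩ ≠ 0 := by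
      intro h0
      apply hv0
      funext i
      have h := hpow i i.2
      rw [Fin.eta] at h
      rw [h, h0, mul_zero]
      rfl
    have hlast := congrFun heig ⟨d - 1, by omega⟩
    rw [hMv, dif_pos (by simp; omega)] at hlast
    have hsum : (∑ j : Fin d, c j * z ^ (j : ℕ)) * v ⟨0, hd⟩ = z ^ d * v ⟨0, hd⟩ := by
      have hL' : (z • v) ⟨d - 1, by omega⟩ = z * (z ^ (d - 1) * v ⟨0, hd⟩) := by
        rw [Pi.smul_apply, smul_eq_mul, hpow (d - 1) (by omega)]
      rw [hL'] at hlast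
      calc (∑ j : Fin d, c j * z ^ (j : ℕ)) * v ⟨0, hd⟩
          = ∑ j : Fin d, c j * v j := by
            rw [Finset.sum_mul]
            refine Finset.sum_congr rfl fun j _ => ?_
            have hj : v j = z ^ (j : ℕ) * v ⟨0, hd⟩ := hpow j j.2
            rw [hj]
            ring
        _ = z * (z ^ (d - 1) * v ⟨0, hd⟩) := hlast
        _ = z ^ d * v ⟨0, hd⟩ := by
            rw [← mul_assoc, ← pow_succ']
            congr 2
            omega
    have hz' : z ^ d = ∑ j : Fin d, c j * z ^ (j : ℕ) :=
      (mul_right_cancel₀ hv00 hsum).symm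
    have := hroots z hz'
    rw [← NNReal.coe_lt_coe, coe_nnnorm, Real.coe_toNNReal _ hL.le]
    exact this
  have hrad : spectralRadius ℂ M < (L.toNNReal : ℝ≥0∞) :=
    spectrum.spectralRadius_lt_of_forall_lt M hspec
  obtain ⟨ℓ, hρℓ, hℓL⟩ := ENNReal.lt_iff_exists_nnreal_btwn.mp hrad
  have hℓL' : (ℓ : ℝ) < L := by
    have h := ENNReal.coe_lt_coe.mp hℓL
    calc (ℓ : ℝ) < (L.toNNReal : ℝ) := NNReal.coe_lt_coe.mpr h
      _ = L := Real.coe_toNNReal _ hL.le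
  have hℓ0 : (0 : ℝ) ≤ (ℓ : ℝ) := ℓ.2
  have hgel := spectrum.pow_nnnorm_pow_one_div_tendsto_nhds_spectralRadius M
  obtain ⟨N₁, hN₁⟩ := eventually_atTop.mp (hgel.eventually_lt_const hρℓ)
  have hnorm : ∀ n, N₁ ≤ n → 1 ≤ n → ‖M ^ n‖ ≤ (ℓ : ℝ) ^ n := by
    intro n h1 h2
    have h := hN₁ n h1
    have hn0 : (n : ℝ) ≠ 0 := Nat.cast_ne_zero.mpr (by omega)
    have hlt : (‖M ^ n‖₊ : ℝ≥0∞) < ((ℓ ^ n : ℝ≥0) : ℝ≥0∞) := by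
      rw [ENNReal.coe_pow, ← ENNReal.rpow_natCast]
      calc (‖M ^ n‖₊ : ℝ≥0∞)
          = ((‖M ^ n‖₊ : ℝ≥0∞) ^ (1 / (n : ℝ))) ^ (n : ℝ) := by
            rw [← ENNReal.rpow_mul, one_div, inv_mul_cancel₀ hn0, ENNReal.rpow_one]
        _ < (ℓ : ℝ≥0∞) ^ (n : ℝ) :=
            ENNReal.rpow_lt_rpow h (by positivity)
    have h3 : ‖M ^ n‖₊ < ℓ ^ n := ENNReal.coe_lt_coe.mp hlt
    exact le_of_lt (by exact_mod_cast h3)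
  set w : ℕ → Fin d → ℂ := fun n i => u (n + (i : ℕ)) with hw
  have hstep : ∀ n, M *ᵥ w n = w (n + 1) := by
    intro n
    funext i
    rw [hMv]
    by_cases h : (i : ℕ) + 1 = d
    · rw [dif_pos h]
      show ∑ j : Fin d, c j * u (n + (j : ℕ)) = u (n + 1 + (i : ℕ))
      rw [show n + 1 + (i : ℕ) = n + d by omega, hrec n]
    · rw [dif_neg h]
      show u (n + ((i : ℕ) + 1)) = u (n + 1 + (i : ℕ))
      congr 1
      omega
  have hwpow : ∀ n, w n = (M ^ n) *ᵥ w 0 := by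
    intro n
    induction n with
    | zero => rw [pow_zero, Matrix.one_mulVec]
    | succ n ih => rw [← hstep n, ih, Matrix.mulVec_mulVec, ← pow_succ']
  have hub : ∀ n, ‖u n‖ ≤ ‖M ^ n‖ * ‖w 0‖ := by
    intro n
    have h1 : ‖u n‖ = ‖w n ⟨0, hd⟩‖ := by
      simp [hw]
    rw [h1, hwpow n]
    exact le_trans (norm_le_pi_norm _ _) (Matrix.linfty_opNorm_mulVec _ _)
  have hq0 : 0 ≤ (ℓ : ℝ) / L := div_nonneg hℓ0 hL.le
  have hq1 : (ℓ : ℝ) / L < 1 := (div_lt_one hL).mpr hℓL'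
  have htend : Tendsto (fun n : ℕ => ‖w 0‖ * ((ℓ : ℝ) / L) ^ n) atTop (𝓝 0) := by
    simpa using (tendsto_pow_atTop_nhds_zero_of_lt_one hq0 hq1).const_mul ‖w 0‖
  obtain ⟨N₂, hN₂⟩ := eventually_atTop.mp (htend.eventually_le_const hr)
  refine ⟨max N₁ N₂ + 1, fun n hn => ?_⟩
  have h1 := le_max_left N₁ N₂
  have h2 := le_max_right N₁ N₂
  have hn1 : 1 ≤ n := by omega
  have hnN₁ : N₁ ≤ n := by omega
  have hnN₂ : N₂ ≤ n := by omega
  calc ‖u n‖ ≤ ‖M ^ n‖ * ‖w 0‖ := hub n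
    _ ≤ (ℓ : ℝ) ^ n * ‖w 0‖ :=
        mul_le_mul_of_nonneg_right (hnorm n hnN₁ hn1) (norm_nonneg _)
    _ = (‖w 0‖ * ((ℓ : ℝ) / L) ^ n) * L ^ n := by
        rw [div_pow]
        field_simp
    _ ≤ r * L ^ n :=
        mul_le_mul_of_nonneg_right (hN₂ n hnN₂) (by positivity)
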